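/- If c is a positive real number and α, β, γ ∈ ℚπ with sin α sin β ≠ 0 satisfy cos c = (cos α cos β + cos γ)/(sin α sin β), then c is transcendental. -/

import Mathlib

open Real

lemma alg_add {x y : ℂ} (hx : IsAlgebraic ℚ x) (hy : IsAlgebraic ℚ y) :
    IsAlgebraic ℚ (x + y) := by
  rw [isAlgebraic_iff_isIntegral] at *; exact hx.add hy

lemma alg_mul {x y : ℂ} (hx : IsAlgebraic ℚ x) (hy : IsAlgebraic ℚ y) :
    IsAlgebraic ℚ (x * y) := by
  rw [isAlgebraic_iff_isIntegral] at *; exact hx.mul hy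

lemma alg_rat (q : ℚ) : IsAlgebraic ℚ ((q : ℂ)) := isAlgebraic_rat ℚ q

lemma alg_exp_rat_pi (q : ℚ) : IsAlgebraic ℚ (Complex.exp ((q : ℂ) * π * Complex.I)) := by
  refine ⟨Polynomial.X ^ (2 * q.den) - 1, ?_, ?_⟩
  · intro h
    have hd : 2 * q.den ≠ 0 := by have := q.den_pos; omega
    apply_fun (Polynomial.coeff · 0) at h
    simp [Polynomial.coeff_X_pow, hd] at h
  · have key : Complex.exp ((q : ℂ) * π * Complex.I) ^ (2 * q.den) =
        Complex.exp ((q.num : ℂ) * (2 * π * Complex.I)) := by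
      rw [← Complex.exp_nat_mul]
      congr 1
      have : ((q : ℂ) * (q.den : ℂ)) = (q.num : ℂ) := by
        rw [show ((q:ℂ) * q.den) = ((q * q.den : ℚ) : ℂ) by push_cast; ring]
        rw [Rat.mul_den_eq_num]; push_cast; ring
      push_cast
      calc (2 * (q.den:ℂ)) * ((q:ℂ) * π * Complex.I)
          = ((q : ℂ) * (q.den : ℂ)) * (2 * π * Complex.I) := by ring
        _ = (q.num : ℂ) * (2 * π * Complex.I) := by rw [this]
    simp only [map_sub, map_pow, map_one, Polynomial.aeval_X, key]
    rw [Complex.exp_int_mul_two_pi_mul_I q.num]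
    ring

lemma alg_neg {x : ℂ} (hx : IsAlgebraic ℚ x) : IsAlgebraic ℚ (-x) := by
  rw [isAlgebraic_iff_isIntegral] at *; exact hx.neg

lemma alg_I : IsAlgebraic ℚ (Complex.I) := by
  refine ⟨Polynomial.X ^ 2 + 1, ?_, by simp [Complex.I_sq]⟩
  intro h
  apply_fun (Polynomial.coeff · 2) at h
  simp [Polynomial.coeff_X_pow, Polynomial.coeff_one] at h

lemma alg_cos_rat_pi (q : ℚ) : IsAlgebraic ℚ (Complex.cos ((q : ℂ) * π)) := by
  have h1 := alg_exp_rat_pi q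
  have h2 : IsAlgebraic ℚ (Complex.exp (-((q:ℂ) * π) * Complex.I)) := by
    have := alg_exp_rat_pi (-q)
    convert this using 2; push_cast; ring
  rw [Complex.cos]
  have h3 : IsAlgebraic ℚ (((2:ℚ):ℂ)⁻¹) := (alg_rat 2).inv
  have := alg_mul (alg_add h2 h1) h3
  convert this using 1
  push_cast; ring

lemma alg_sin_rat_pi (q : ℚ) : IsAlgebraic ℚ (Complex.sin ((q : ℂ) * π)) := by
  have h1 := alg_exp_rat_pi q
  have h2 : IsAlgebraic ℚ (Complex.exp (-((q:ℂ) * π) * Complex.I)) := by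
    have := alg_exp_rat_pi (-q)
    convert this using 2; push_cast; ring
  rw [Complex.sin]
  have h3 : IsAlgebraic ℚ (((2:ℚ):ℂ)⁻¹) := (alg_rat 2).inv
  have := alg_mul (alg_mul (alg_add h2 (alg_neg h1)) alg_I) h3
  convert this using 1
  push_cast; ring

theorem transcendental_of_slc2
    (lindemann : ∀ (n : ℕ) (α c : Fin n → ℂ), Function.Injective α →
      (∀ i, IsAlgebraic ℚ (α i)) → (∀ i, IsAlgebraic ℚ (c i)) →
      (∑ i, c i * Complex.exp (α i)) = 0 → ∀ i, c i = 0)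
    (α β γ c : ℝ) (hc : 0 < c)
    (hαQ : ∃ q : ℚ, α = (q : ℝ) * π) (hβQ : ∃ q : ℚ, β = (q : ℝ) * π)
    (hγQ : ∃ q : ℚ, γ = (q : ℝ) * π)
    (hsin : Real.sin α * Real.sin β ≠ 0)
    (hrel : Real.cos c = (Real.cos α * Real.cos β + Real.cos γ) / (Real.sin α * Real.sin β)) :
    Transcendental ℚ c := by
  intro halg
  -- cast algebraicity of c to ℂ
  obtain ⟨p, hp, hp0⟩ := halg
  have hcC : IsAlgebraic ℚ ((c : ℂ)) := by
    refine ⟨p, hp, ?_⟩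
    have : ((c : ℝ) : ℂ) = algebraMap ℝ ℂ c := rfl
    rw [this, Polynomial.aeval_algebraMap_apply, hp0, map_zero]
  obtain ⟨qα, rfl⟩ := hαQ
  obtain ⟨qβ, rfl⟩ := hβQ
  obtain ⟨qγ, rfl⟩ := hγQ
  -- cos c is algebraic
  have hcosα : ((Real.cos ((qα:ℝ)*π) : ℝ) : ℂ) = Complex.cos ((qα:ℂ)*π) := by
    rw [Complex.ofReal_cos]; push_cast; ring_nf
  have hcosβ : ((Real.cos ((qβ:ℝ)*π) : ℝ) : ℂ) = Complex.cos ((qβ:ℂ)*π) := by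
    rw [Complex.ofReal_cos]; push_cast; ring_nf
  have hcosγ : ((Real.cos ((qγ:ℝ)*π) : ℝ) : ℂ) = Complex.cos ((qγ:ℂ)*π) := by
    rw [Complex.ofReal_cos]; push_cast; ring_nf
  have hsinα : ((Real.sin ((qα:ℝ)*π) : ℝ) : ℂ) = Complex.sin ((qα:ℂ)*π) := by
    rw [Complex.ofReal_sin]; push_cast; ring_nf
  have hsinβ : ((Real.sin ((qβ:ℝ)*π) : ℝ) : ℂ) = Complex.sin ((qβ:ℂ)*π) := by
    rw [Complex.ofReal_sin]; push_cast; ring_nf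
  have hcosc : IsAlgebraic ℚ ((Real.cos c : ℂ)) := by
    have : ((Real.cos c : ℝ) : ℂ) =
        (Complex.cos ((qα:ℂ)*π) * Complex.cos ((qβ:ℂ)*π) + Complex.cos ((qγ:ℂ)*π)) *
          (Complex.sin ((qα:ℂ)*π) * Complex.sin ((qβ:ℂ)*π))⁻¹ := by
      rw [hrel]
      push_cast
      rw [div_eq_mul_inv]
    rw [this]
    exact alg_mul (alg_add (alg_mul (alg_cos_rat_pi qα) (alg_cos_rat_pi qβ)) (alg_cos_rat_pi qγ))
      ((alg_mul (alg_sin_rat_pi qα) (alg_sin_rat_pi qβ)).inv)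
  -- apply Lindemann with exponents cI, -cI, 0
  set e : Fin 3 → ℂ := ![ (c:ℂ) * Complex.I, -((c:ℂ) * Complex.I), 0] with he
  set k : Fin 3 → ℂ := ![ (1:ℂ)/2, (1:ℂ)/2, -(Real.cos c : ℂ)] with hk
  have hcI : (c:ℂ) * Complex.I ≠ 0 := by
    simp [Complex.I_ne_zero, Complex.ofReal_ne_zero, hc.ne']
  have hinj : Function.Injective e := by
    intro i j hij
    fin_cases i <;> fin_cases j <;>
      simp [he, hc.ne', Complex.ext_iff] at hij ⊢ <;>
      exact absurd hij (by intro h; nlinarith)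
  have halge : ∀ i, IsAlgebraic ℚ (e i) := by
    intro i
    fin_cases i <;> simp only [he, Matrix.cons_val_zero, Matrix.cons_val_one, Matrix.head_cons]
    · exact alg_mul hcC alg_I
    · exact alg_neg (alg_mul hcC alg_I)
    · simpa using alg_rat 0
  have halgk : ∀ i, IsAlgebraic ℚ (k i) := by
    intro i
    fin_cases i <;> simp only [hk, Matrix.cons_val_zero, Matrix.cons_val_one, Matrix.head_cons]
    · simpa using alg_rat (1/2)
    · simpa using alg_rat (1/2)
    · exact alg_neg hcosc
  have hsum : (∑ i, k i * Complex.exp (e i)) = 0 := by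
    have hcc : ((Real.cos c : ℝ) : ℂ) = Complex.cos (c : ℂ) := Complex.ofReal_cos c
    rw [Fin.sum_univ_three]
    simp only [he, hk, Matrix.cons_val_zero, Matrix.cons_val_one, Matrix.head_cons,
      Matrix.cons_val_two, Matrix.tail_cons]
    rw [hcc]
    simp only [Complex.cos, Complex.exp_zero]
    ring
  have := lindemann 3 e k hinj halge halgk hsum 0
  simp [hk] at this
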